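/- Let X be a topological space and Y a disconnected metrizable separable space. Then X is almost strongly zero-dimensional if and only if K₁(X,Y) = B₁(X,Y). -/

import Mathlib

open Set Filter Topology

def IsZeroSet {X : Type*} [TopologicalSpace X] (A : Set X) : Prop :=
  ∃ f : X → ℝ, Continuous f ∧ A = f ⁻¹' {0}

def IsCozeroSet {X : Type*} [TopologicalSpace X] (A : Set X) : Prop := IsZeroSet Aᶜ

def IsDiscreteFamily {X : Type*} [TopologicalSpace X] {ι : Type*} (U : ι → Set X) : Prop :=
  ∀ x : X, ∃ V ∈ 𝓝 x, {i | (U i ∩ V).Nonempty}.Subsingleton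

def IsSFDFamily {X : Type*} [TopologicalSpace X] {ι : Type*} (A : ι → Set X) : Prop :=
  ∃ U : ι → Set X, IsDiscreteFamily U ∧ (∀ i, IsCozeroSet (U i)) ∧ ∀ i, closure (A i) ⊆ U i

def IsSFDSetFamily {X : Type*} [TopologicalSpace X] (𝓐 : Set (Set X)) : Prop :=
  IsSFDFamily (fun A : 𝓐 => (A : Set X))

def IsBaseFor {X Y : Type*} [TopologicalSpace X] [TopologicalSpace Y]
    (𝓑 : Set (Set X)) (f : X → Y) : Prop :=
  ∀ V : Set Y, IsOpen V → ∃ 𝓢 ⊆ 𝓑, f ⁻¹' V = ⋃₀ 𝓢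

def FunctionallyFSigma {X : Type*} [TopologicalSpace X] (A : Set X) : Prop :=
  ∃ F : ℕ → Set X, (∀ n, IsZeroSet (F n)) ∧ A = ⋃ n, F n

def MemK1 {X Y : Type*} [TopologicalSpace X] [TopologicalSpace Y] (f : X → Y) : Prop :=
  ∀ V : Set Y, IsOpen V → FunctionallyFSigma (f ⁻¹' V)

def MemB1 {X Y : Type*} [TopologicalSpace X] [TopologicalSpace Y] (f : X → Y) : Prop :=
  ∃ g : ℕ → X → Y, (∀ n, Continuous (g n)) ∧
    ∀ x, Tendsto (fun n => g n x) atTop (𝓝 (f x))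

def MemSigmaF {X Y : Type*} [TopologicalSpace X] [TopologicalSpace Y] (f : X → Y) : Prop :=
  ∃ 𝓑 : ℕ → Set (Set X), (∀ n, IsSFDSetFamily (𝓑 n)) ∧ IsBaseFor (⋃ n, 𝓑 n) f

def MemSigmaF0 {X Y : Type*} [TopologicalSpace X] [TopologicalSpace Y] (f : X → Y) : Prop :=
  ∃ 𝓑 : ℕ → Set (Set X), (∀ n, IsSFDSetFamily (𝓑 n)) ∧
    (∀ n, ∀ A ∈ 𝓑 n, IsZeroSet A) ∧ IsBaseFor (⋃ n, 𝓑 n) f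

def CompletelySeparatedSets {X : Type*} [TopologicalSpace X] (A B : Set X) : Prop :=
  ∃ h : X → ℝ, Continuous h ∧ (∀ x, h x ∈ Icc (0:ℝ) 1) ∧
    (∀ x ∈ A, h x = 0) ∧ ∀ x ∈ B, h x = 1

def StronglyZeroDimensional (X : Type*) [TopologicalSpace X] : Prop :=
  ∀ A B : Set X, CompletelySeparatedSets A B → ∃ U : Set X, IsClopen U ∧ A ⊆ U ∧ U ⊆ Bᶜ

def IsCSet {X : Type*} [TopologicalSpace X] (A : Set X) : Prop :=
  ∃ U : ℕ → Set X, (∀ n, IsClopen (U n)) ∧ A = ⋂ n, U n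

def IsCSigmaSet {X : Type*} [TopologicalSpace X] (A : Set X) : Prop :=
  ∃ C : ℕ → Set X, (∀ n, IsCSet (C n)) ∧ A = ⋃ n, C n

def AlmostStronglyZeroDimensional (X : Type*) [TopologicalSpace X] : Prop :=
  ∀ A : Set X, IsZeroSet A → IsCSigmaSet A

def CountablyCompactIn {X : Type*} [TopologicalSpace X] (F : Set X) : Prop :=
  ∀ U : ℕ → Set X, (∀ n, IsOpen (U n)) → F ⊆ ⋃ n, U n →
    ∃ s : Finset ℕ, F ⊆ ⋃ n ∈ s, U n

lemma isZeroSet_univ {X : Type*} [TopologicalSpace X] : IsZeroSet (univ : Set X) :=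
  ⟨fun _ => 0, continuous_const, by ext x; simp⟩

lemma isZeroSet_empty {X : Type*} [TopologicalSpace X] : IsZeroSet (∅ : Set X) :=
  ⟨fun _ => 1, continuous_const, by ext x; simp⟩

lemma isZeroSet_preimage {X Y : Type*} [TopologicalSpace X] [TopologicalSpace Y]
    {g : X → Y} (hg : Continuous g) {A : Set Y} (h : IsZeroSet A) :
    IsZeroSet (g ⁻¹' A) := by
  obtain ⟨f, hf, rfl⟩ := h
  exact ⟨f ∘ g, hf.comp hg, rfl⟩

lemma isZeroSet_iInter {X : Type*} [TopologicalSpace X] {f : ℕ → Set X}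
    (h : ∀ n, IsZeroSet (f n)) : IsZeroSet (⋂ n, f n) := by
  choose g hg hgf using h
  have hbd : ∀ (n : ℕ) (x : X), ‖(2⁻¹ : ℝ)^n * min 1 |g n x|‖ ≤ (1/2 : ℝ)^n := by
    intro n x
    rw [Real.norm_eq_abs, abs_mul, abs_of_nonneg (by positivity : (0:ℝ) ≤ (2⁻¹:ℝ)^n),
      abs_of_nonneg (le_min zero_le_one (abs_nonneg _))]
    calc (2⁻¹:ℝ)^n * min 1 |g n x| ≤ (2⁻¹:ℝ)^n * 1 := by
          exact mul_le_mul_of_nonneg_left (min_le_left _ _) (by positivity)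
      _ = (1/2:ℝ)^n := by norm_num
  have hsumm : ∀ x : X, Summable fun n => (2⁻¹ : ℝ)^n * min 1 |g n x| := by
    intro x
    apply Summable.of_norm_bounded summable_geometric_two
    intro n; exact hbd n x
  refine ⟨fun x => ∑' n, (2⁻¹:ℝ)^n * min 1 |g n x|, ?_, ?_⟩
  · apply continuous_tsum (u := fun n => (1/2:ℝ)^n)
    · intro n
      exact (continuous_const.mul ((continuous_const.min
        ((hg n).abs)))) -- min 1 |g n x|
    · exact summable_geometric_two
    · intro n x; exact hbd n x
  · ext x
    simp only [mem_iInter, mem_preimage, mem_singleton_iff]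
    constructor
    · intro hx
      have : ∀ n, (2⁻¹:ℝ)^n * min 1 |g n x| = 0 := by
        intro n
        have : x ∈ f n := hx n
        rw [hgf n] at this
        simp only [mem_preimage, mem_singleton_iff] at this
        simp [this]
      simp only [this]
      exact tsum_zero
    · intro hx n
      rw [hgf n]
      have hterm : ∀ m, (0:ℝ) ≤ (2⁻¹:ℝ)^m * min 1 |g m x| := by
        intro m; positivity
      have h1 : (2⁻¹:ℝ)^n * min 1 |g n x| ≤ 0 := by
        rw [← hx]
        exact Summable.le_tsum (hsumm x) n (fun m _ => hterm m)
      have h2 : (2⁻¹:ℝ)^n * min 1 |g n x| = 0 := le_antisymm h1 (hterm n)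
      have h3 : min 1 |g n x| = 0 := by
        have hpow : (0:ℝ) < (2⁻¹:ℝ)^n := by positivity
        rcases mul_eq_zero.1 h2 with h | h
        · exact absurd h (ne_of_gt hpow)
        · exact h
      simp only [mem_preimage, mem_singleton_iff]
      have : |g n x| = 0 := by
        rcases le_total (1:ℝ) (|g n x|) with h|h
        · rw [min_eq_left h] at h3; norm_num at h3
        · rwa [min_eq_right h] at h3
      exact abs_eq_zero.1 this

lemma iUnion_pair_eq {X : Type*} (B : ℕ → ℕ → Set X) :
    ⋃ k : ℕ, B ((Denumerable.eqv (ℕ × ℕ)).symm k).1 ((Denumerable.eqv (ℕ × ℕ)).symm k).2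
      = ⋃ n, ⋃ m, B n m := by
  ext x
  simp only [mem_iUnion]
  constructor
  · rintro ⟨k, hk⟩; exact ⟨_, _, hk⟩
  · rintro ⟨n, m, h⟩
    refine ⟨Denumerable.eqv (ℕ × ℕ) (n, m), ?_⟩
    simpa using h

lemma isCSigmaSet_iUnion {X : Type*} [TopologicalSpace X] {A : ℕ → Set X}
    (h : ∀ n, IsCSigmaSet (A n)) : IsCSigmaSet (⋃ n, A n) := by
  choose C hC hAC using h
  refine ⟨fun k => C ((Denumerable.eqv (ℕ × ℕ)).symm k).1 ((Denumerable.eqv (ℕ × ℕ)).symm k).2,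
    fun k => hC _ _, ?_⟩
  rw [iUnion_pair_eq]
  simp only [← hAC]


lemma isZeroSet_abs_ge {X : Type*} [TopologicalSpace X] {g : X → ℝ} (hg : Continuous g)
    (r : ℝ) : IsZeroSet {x | r ≤ |g x|} := by
  refine ⟨fun x => max (r - |g x|) 0, (continuous_const.sub hg.abs).max continuous_const, ?_⟩
  ext x
  simp only [mem_setOf_eq, mem_preimage, mem_singleton_iff, max_eq_right_iff, sub_nonpos]

lemma functionallyFSigma_compl_zeroSet {X : Type*} [TopologicalSpace X] {A : Set X}
    (h : IsZeroSet A) : FunctionallyFSigma Aᶜ := by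
  obtain ⟨g, hg, rfl⟩ := h
  refine ⟨fun n => {x | 1/(n+1 : ℝ) ≤ |g x|}, fun n => isZeroSet_abs_ge hg _, ?_⟩
  ext x
  simp only [mem_compl_iff, mem_preimage, mem_singleton_iff, mem_iUnion, mem_setOf_eq]
  constructor
  · intro hx
    have habs : 0 < |g x| := abs_pos.2 hx
    obtain ⟨n, hn⟩ := exists_nat_one_div_lt habs
    exact ⟨n, le_of_lt hn⟩
  · rintro ⟨n, hn⟩ hx
    rw [hx] at hn
    simp at hn
    have : (0:ℝ) < 1/(n+1:ℝ) := by positivity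
    linarith

lemma functionallyFSigma_of_zeroSet {X : Type*} [TopologicalSpace X] {A : Set X}
    (h : IsZeroSet A) : FunctionallyFSigma A :=
  ⟨fun _ => A, fun _ => h, (iUnion_const A).symm⟩

lemma isZeroSet_infDist_ge {Y : Type*} [MetricSpace Y] (s : Set Y) (r : ℝ) :
    IsZeroSet {y | r ≤ Metric.infDist y s} := by
  refine ⟨fun y => max (r - Metric.infDist y s) 0,
    (continuous_const.sub (Metric.continuous_infDist_pt s)).max continuous_const, ?_⟩
  ext y
  simp only [mem_setOf_eq, mem_preimage, mem_singleton_iff, max_eq_right_iff, sub_nonpos]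


lemma nat_find_congr {p q : ℕ → Prop} [DecidablePred p] [DecidablePred q]
    (h : ∀ n, p n ↔ q n) (hp : ∃ n, p n) (hq : ∃ n, q n) : Nat.find hp = Nat.find hq :=
  le_antisymm (Nat.find_le ((h _).mpr (Nat.find_spec hq))) (Nat.find_le ((h _).mp (Nat.find_spec hp)))

lemma exists_uniform_bound {P : ℕ → ℕ → Prop} (J : ℕ) (h : ∀ j < J, ∃ M, ∀ m ≥ M, P j m) :
    ∃ M, ∀ j < J, ∀ m ≥ M, P j m := by
  induction J with
  | zero => exact ⟨0, fun j hj => absurd hj (Nat.not_lt_zero j)⟩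
  | succ n ih =>
    obtain ⟨M1, hM1⟩ := ih (fun j hj => h j (hj.trans (Nat.lt_succ_self n)))
    obtain ⟨M2, hM2⟩ := h n (Nat.lt_succ_self n)
    refine ⟨max M1 M2, fun j hj m hm => ?_⟩
    rcases Nat.lt_succ_iff_lt_or_eq.1 hj with hj' | rfl
    · exact hM1 j hj' m (le_trans (le_max_left _ _) hm)
    · exact hM2 m (le_trans (le_max_right _ _) hm)

open Classical in
noncomputable def auxSt {X Y : Type*} (K : ℕ → ℕ → Set X) (D : ℕ → ℕ → ℕ → Set X)
    (z : ℕ → ℕ → Y) (y0 : Y) (m : ℕ) (x : X) : ℕ → Option ℕ × Y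
  | 0 =>
    if c : ∃ j, j ≤ m ∧ x ∈ D 0 j m then (some (Nat.find c), z 0 (Nat.find c)) else (none, y0)
  | (i+1) =>
    match auxSt K D z y0 m x i with
    | (some p, w) =>
      if c : ∃ j, j ≤ m ∧ x ∈ D (i+1) j m ∧ (K (i+1) j ∩ K i p).Nonempty then
        (some (Nat.find c), z (i+1) (Nat.find c)) else (none, w)
    | (none, w) => (none, w)

open Classical in
lemma auxSt_congr {X Y : Type*} (K : ℕ → ℕ → Set X) (D : ℕ → ℕ → ℕ → Set X)
    (z : ℕ → ℕ → Y) (y0 : Y) (m : ℕ) {x x' : X}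
    (h : ∀ i ≤ m, ∀ j ≤ m, (x' ∈ D i j m ↔ x ∈ D i j m)) :
    ∀ i ≤ m, auxSt K D z y0 m x' i = auxSt K D z y0 m x i := by
  intro i
  induction i with
  | zero =>
    intro _
    simp only [auxSt]
    by_cases c : ∃ j, j ≤ m ∧ x ∈ D 0 j m
    · have c' : ∃ j, j ≤ m ∧ x' ∈ D 0 j m := by
        obtain ⟨j, hj, hx⟩ := c
        exact ⟨j, hj, (h 0 (Nat.zero_le m) j hj).2 hx⟩
      rw [dif_pos c, dif_pos c']
      have : Nat.find c' = Nat.find c :=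
        nat_find_congr (fun j => and_congr_right fun hj => h 0 (Nat.zero_le m) j hj) c' c
      rw [this]
    · have c' : ¬ ∃ j, j ≤ m ∧ x' ∈ D 0 j m := by
        rintro ⟨j, hj, hx⟩
        exact c ⟨j, hj, (h 0 (Nat.zero_le m) j hj).1 hx⟩
      rw [dif_neg c, dif_neg c']
  | succ i ih =>
    intro hi
    have hi' : i ≤ m := Nat.le_of_succ_le hi
    simp only [auxSt, ih hi']
    rcases hst : auxSt K D z y0 m x i with ⟨op, w⟩
    rcases op with _ | p
    · rfl
    · simp only []
      by_cases c : ∃ j, j ≤ m ∧ x ∈ D (i+1) j m ∧ (K (i+1) j ∩ K i p).Nonempty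
    -- continue
      · have c' : ∃ j, j ≤ m ∧ x' ∈ D (i+1) j m ∧ (K (i+1) j ∩ K i p).Nonempty := by
          obtain ⟨j, hj, hx, hne⟩ := c
          exact ⟨j, hj, (h (i+1) hi j hj).2 hx, hne⟩
        rw [dif_pos c, dif_pos c']
        have : Nat.find c' = Nat.find c := by
          refine nat_find_congr (fun j => ?_) c' c
          constructor
          · rintro ⟨hj, hx, hne⟩; exact ⟨hj, (h (i+1) hi j hj).1 hx, hne⟩
          · rintro ⟨hj, hx, hne⟩; exact ⟨hj, (h (i+1) hi j hj).2 hx, hne⟩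
        rw [this]
      · have c' : ¬ ∃ j, j ≤ m ∧ x' ∈ D (i+1) j m ∧ (K (i+1) j ∩ K i p).Nonempty := by
          rintro ⟨j, hj, hx, hne⟩
          exact c ⟨j, hj, (h (i+1) hi j hj).1 hx, hne⟩
        rw [dif_neg c, dif_neg c']

open Classical in
lemma auxSt_continuous {X Y : Type*} [TopologicalSpace X] [TopologicalSpace Y]
    (K : ℕ → ℕ → Set X) (D : ℕ → ℕ → ℕ → Set X) (z : ℕ → ℕ → Y) (y0 : Y) (m : ℕ)
    (hD : ∀ i j, IsClopen (D i j m)) :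
    Continuous (fun x => (auxSt K D z y0 m x m).2) := by
  rw [continuous_iff_continuousAt]
  intro x
  set W := ⋂ i ∈ Finset.range (m+1), ⋂ j ∈ Finset.range (m+1),
    (if x ∈ D i j m then D i j m else (D i j m)ᶜ) with hWdef
  have hWclopen : IsClopen W := by
    apply isClopen_biInter_finset; intro i _
    apply isClopen_biInter_finset; intro j _
    split
    · exact hD i j
    · exact (hD i j).compl
  have hxW : x ∈ W := by
    simp only [hWdef, mem_iInter]
    intro i _ j _
    by_cases hx : x ∈ D i j m
    · rw [if_pos hx]; exact hx
    · rw [if_neg hx]; exact hx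
  have hagree : ∀ x' ∈ W, ∀ i ≤ m, ∀ j ≤ m, (x' ∈ D i j m ↔ x ∈ D i j m) := by
    intro x' hx' i hi j hj
    simp only [hWdef, mem_iInter] at hx'
    have := hx' i (by simp [Finset.mem_range]; omega) j (by simp [Finset.mem_range]; omega)
    by_cases hx : x ∈ D i j m
    · rw [if_pos hx] at this; exact ⟨fun _ => hx, fun _ => this⟩
    · rw [if_neg hx] at this; exact ⟨fun h => absurd h this, fun h => absurd h hx⟩
  have hev : (fun x' => (auxSt K D z y0 m x' m).2) =ᶠ[𝓝 x]
      fun _ => (auxSt K D z y0 m x m).2 := by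
    filter_upwards [hWclopen.2.mem_nhds hxW] with x' hx'
    rw [auxSt_congr K D z y0 m (hagree x' hx') m le_rfl]
  exact hev.continuousAt

open Classical in
lemma auxSt_stab {X Y : Type*} (K : ℕ → ℕ → Set X) (D : ℕ → ℕ → ℕ → Set X)
    (z : ℕ → ℕ → Y) (y0 : Y) (x : X)
    (hKD : ∀ i j m, K i j ⊆ D i j m)
    (hnotK : ∀ i j, x ∉ K i j → ∃ M, ∀ m ≥ M, x ∉ D i j m)
    (hxc : ∀ i, ∃ j, x ∈ K i j) :
    ∀ i, ∃ M, ∀ m ≥ M,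
      auxSt K D z y0 m x i = (some (Nat.find (hxc i)), z i (Nat.find (hxc i))) := by
  intro i
  induction i with
  | zero =>
    obtain ⟨M0, hM0⟩ := exists_uniform_bound (Nat.find (hxc 0))
      (fun j hj => hnotK 0 j (Nat.find_min (hxc 0) hj))
    refine ⟨max M0 (Nat.find (hxc 0)), fun m hm => ?_⟩
    have hm0 : M0 ≤ m := le_trans (le_max_left _ _) hm
    have hmJ : Nat.find (hxc 0) ≤ m := le_trans (le_max_right _ _) hm
    have c : ∃ j, j ≤ m ∧ x ∈ D 0 j m :=
      ⟨Nat.find (hxc 0), hmJ, hKD 0 _ m (Nat.find_spec (hxc 0))⟩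
    simp only [auxSt]
    rw [dif_pos c]
    have : Nat.find c = Nat.find (hxc 0) := by
      rw [Nat.find_eq_iff]
      refine ⟨⟨hmJ, hKD 0 _ m (Nat.find_spec (hxc 0))⟩, fun j hj => ?_⟩
      rintro ⟨hjm, hjD⟩
      exact hM0 j hj m hm0 hjD
    rw [this]
  | succ i ih =>
    obtain ⟨Mi, hMi⟩ := ih
    obtain ⟨M1, hM1⟩ := exists_uniform_bound (Nat.find (hxc (i+1)))
      (fun j hj => hnotK (i+1) j (Nat.find_min (hxc (i+1)) hj))
    refine ⟨max (max Mi M1) (Nat.find (hxc (i+1))), fun m hm => ?_⟩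
    have hmi : Mi ≤ m := le_trans (le_trans (le_max_left _ _) (le_max_left _ _)) hm
    have hm1 : M1 ≤ m := le_trans (le_trans (le_max_right _ _) (le_max_left _ _)) hm
    have hmJ : Nat.find (hxc (i+1)) ≤ m := le_trans (le_max_right _ _) hm
    have c : ∃ j, j ≤ m ∧ x ∈ D (i+1) j m ∧
        (K (i+1) j ∩ K i (Nat.find (hxc i))).Nonempty :=
      ⟨Nat.find (hxc (i+1)), hmJ, hKD (i+1) _ m (Nat.find_spec (hxc (i+1))),
        ⟨x, Nat.find_spec (hxc (i+1)), Nat.find_spec (hxc i)⟩⟩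
    simp only [auxSt, hMi m hmi]
    rw [dif_pos c]
    have : Nat.find c = Nat.find (hxc (i+1)) := by
      rw [Nat.find_eq_iff]
      refine ⟨⟨hmJ, hKD (i+1) _ m (Nat.find_spec (hxc (i+1))),
        ⟨x, Nat.find_spec (hxc (i+1)), Nat.find_spec (hxc i)⟩⟩, fun j hj => ?_⟩
      rintro ⟨hjm, hjD, hne⟩
      exact hM1 j hj m hm1 hjD
    rw [this]

open Classical in
lemma auxSt_dist {X Y : Type*} [MetricSpace Y] (K : ℕ → ℕ → Set X) (D : ℕ → ℕ → ℕ → Set X)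
    (z : ℕ → ℕ → Y) (y0 : Y) (x : X) (f : X → Y)
    (hdist : ∀ i j, ∀ w ∈ K i j, dist (f w) (z i j) ≤ (2⁻¹:ℝ)^i)
    (m n : ℕ) (p0 : ℕ)
    (hst : auxSt K D z y0 m x n = (some p0, z n p0))
    (hp0 : x ∈ K n p0) :
    ∀ i, n ≤ i → i ≤ m →
      dist ((auxSt K D z y0 m x i).2) (f x) ≤ 4*(2⁻¹:ℝ)^n - 3*(2⁻¹:ℝ)^i ∧
      (∀ p, (auxSt K D z y0 m x i).1 = some p →
        (auxSt K D z y0 m x i).2 = z i p ∧ (K i p).Nonempty) := by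
  intro i hni
  induction i, hni using Nat.le_induction with
  | base =>
    intro _
    rw [hst]
    constructor
    · simp only []
      rw [dist_comm]
      have := hdist n p0 x hp0
      have h4 : 4*(2⁻¹:ℝ)^n - 3*(2⁻¹:ℝ)^n = (2⁻¹:ℝ)^n := by ring
      rw [h4]
      exact this
    · intro p hp
      simp only [] at hp
      injection hp with hp
      subst hp
      exact ⟨rfl, ⟨x, hp0⟩⟩
  | succ i hni IH =>
    intro him
    have him' : i ≤ m := Nat.le_of_succ_le him
    obtain ⟨IH1, IH2⟩ := IH him'
    have hqpos : (0:ℝ) < (2⁻¹:ℝ)^i := by positivity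
    have hqsucc : (2⁻¹:ℝ)^(i+1) = (2⁻¹:ℝ)^i * 2⁻¹ := pow_succ _ _
    rcases hsti : auxSt K D z y0 m x i with ⟨op, w⟩
    rw [hsti] at IH1 IH2
    rcases op with _ | p
    · -- none case
      simp only [auxSt, hsti]
      constructor
      · simp only [] at IH1 ⊢
        nlinarith
      · intro p hp; simp at hp
    · obtain ⟨hw, hKne⟩ := IH2 p rfl
      simp only [] at hw IH1
      subst hw
      simp only [auxSt, hsti]
      by_cases c : ∃ j, j ≤ m ∧ x ∈ D (i+1) j m ∧ (K (i+1) j ∩ K i p).Nonempty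
      · rw [dif_pos c]
        obtain ⟨hjm, hjD, w', hw'1, hw'2⟩ := Nat.find_spec c
        constructor
        · simp only []
          have h1 : dist (z (i+1) (Nat.find c)) (f w') ≤ (2⁻¹:ℝ)^(i+1) := by
            rw [dist_comm]; exact hdist (i+1) (Nat.find c) w' hw'1
          have h2 : dist (f w') (z i p) ≤ (2⁻¹:ℝ)^i := hdist i p w' hw'2
          have h3 : dist (z (i+1) (Nat.find c)) (f x) ≤
              dist (z (i+1) (Nat.find c)) (f w') + dist (f w') (z i p) + dist (z i p) (f x) :=
            dist_triangle4 _ _ _ _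
          nlinarith
        · intro p' hp'
          simp only [] at hp'
          injection hp' with hp'
          subst hp'
          exact ⟨rfl, ⟨w', hw'1⟩⟩
      · rw [dif_neg c]
        constructor
        · simp only [] at IH1 ⊢
          nlinarith
        · intro p' hp'; simp at hp'

theorem stmt18 {X Y : Type*} [TopologicalSpace X] [TopologicalSpace Y]
    [TopologicalSpace.MetrizableSpace Y] [TopologicalSpace.SeparableSpace Y]
    (hY : ∃ U V : Set Y, IsClopen U ∧ IsClopen V ∧ U.Nonempty ∧ V.Nonempty ∧
      Disjoint U V ∧ U ∪ V = Set.univ) :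
    AlmostStronglyZeroDimensional X ↔ ∀ f : X → Y, MemK1 f ↔ MemB1 f := by
  classical
  obtain ⟨U, V, hU, hV, ⟨u, hu⟩, ⟨v, hv⟩, hUV, hUVuniv⟩ := hY
  constructor
  · intro hX f
    letI : MetricSpace Y := TopologicalSpace.metrizableSpaceMetric Y
    constructor
    · intro hf
      have hYne : Nonempty Y := ⟨u⟩
      obtain ⟨y, hy⟩ := TopologicalSpace.exists_dense_seq Y
      have main : ∀ n : ℕ, ∃ (K : ℕ → Set X) (z : ℕ → Y), (∀ j, IsCSet (K j)) ∧
          (∀ j, ∀ w ∈ K j, dist (f w) (z j) ≤ (2⁻¹:ℝ)^n) ∧ (⋃ j, K j) = univ := by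
        intro n
        have hq : (0:ℝ) < (2⁻¹:ℝ)^n := by positivity
        have hpre : ∀ k : ℕ, ∃ C : ℕ → Set X, (∀ i, IsCSet (C i)) ∧
            f ⁻¹' (Metric.ball (y k) ((2⁻¹:ℝ)^n)) = ⋃ i, C i := by
          intro k
          obtain ⟨Z, hZ, hZe⟩ := hf _ Metric.isOpen_ball
          rw [hZe]
          exact isCSigmaSet_iUnion (fun i => hX _ (hZ i))
        choose C hC hCe using hpre
        refine ⟨fun j => C ((Denumerable.eqv (ℕ × ℕ)).symm j).1
            ((Denumerable.eqv (ℕ × ℕ)).symm j).2,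
          fun j => y ((Denumerable.eqv (ℕ × ℕ)).symm j).1, fun j => hC _ _, ?_, ?_⟩
        · intro j w hw
          have : w ∈ f ⁻¹' (Metric.ball (y ((Denumerable.eqv (ℕ × ℕ)).symm j).1) ((2⁻¹:ℝ)^n)) := by
            rw [hCe]
            exact mem_iUnion.2 ⟨_, hw⟩
          exact le_of_lt (by simpa [Metric.mem_ball] using this)
        · rw [iUnion_pair_eq C]
          ext w
          simp only [mem_iUnion, mem_univ, iff_true]
          obtain ⟨k, hk⟩ := Metric.denseRange_iff.1 hy (f w) _ hq
          have : w ∈ f ⁻¹' (Metric.ball (y k) ((2⁻¹:ℝ)^n)) := by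
            simpa [Metric.mem_ball] using hk
          rw [hCe] at this
          obtain ⟨i, hi⟩ := mem_iUnion.1 this
          exact ⟨k, i, hi⟩
      choose K z hKc hKdist hKcov using main
      choose Uc hUclopen hKUe using fun n j => hKc n j
      set D : ℕ → ℕ → ℕ → Set X := fun n j m => ⋂ i ∈ Finset.range (m+1), Uc n j i with hD
      have hDclopen : ∀ n j m, IsClopen (D n j m) :=
        fun n j m => isClopen_biInter_finset (fun i _ => hUclopen n j i)
      have hKD : ∀ n j m, K n j ⊆ D n j m := by
        intro n j m w hw
        simp only [hD, mem_iInter]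
        intro i _
        rw [hKUe n j] at hw
        exact mem_iInter.1 hw i
      have hnotK : ∀ x : X, ∀ n j, x ∉ K n j → ∃ M, ∀ m ≥ M, x ∉ D n j m := by
        intro x n j hx
        rw [hKUe n j] at hx
        simp only [mem_iInter, not_forall] at hx
        obtain ⟨i0, hi0⟩ := hx
        refine ⟨i0, fun m hm hxD => ?_⟩
        simp only [hD, mem_iInter, Finset.mem_range] at hxD
        exact hi0 (hxD i0 (by omega))
      refine ⟨fun m x => (auxSt K D z (y 0) m x m).2,
        fun m => auxSt_continuous K D z (y 0) m (fun i j => hDclopen i j m), ?_⟩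
      intro x
      have hxc : ∀ i, ∃ j, x ∈ K i j := by
        intro i
        have : x ∈ ⋃ j, K i j := by rw [hKcov i]; trivial
        exact mem_iUnion.1 this
      have hstab := auxSt_stab K D z (y 0) x hKD (hnotK x) hxc
      rw [Metric.tendsto_atTop]
      intro ε hε
      obtain ⟨n, hn⟩ := exists_pow_lt_of_lt_one (show (0:ℝ) < ε/4 by linarith)
        (by norm_num : (2⁻¹:ℝ) < 1)
      obtain ⟨M, hM⟩ := hstab n
      refine ⟨max M n, fun m hm => ?_⟩
      have hmM : M ≤ m := le_trans (le_max_left _ _) hm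
      have hmn : n ≤ m := le_trans (le_max_right _ _) hm
      have hinv := auxSt_dist K D z (y 0) x f (fun i j w hw => hKdist i j w hw) m n
        (Nat.find (hxc n)) (hM m hmM) (Nat.find_spec (hxc n)) m hmn le_rfl
      calc dist ((auxSt K D z (y 0) m x m).2) (f x)
          ≤ 4*(2⁻¹:ℝ)^n - 3*(2⁻¹:ℝ)^m := hinv.1
        _ ≤ 4*(2⁻¹:ℝ)^n := by nlinarith [pow_pos (show (0:ℝ)<2⁻¹ by norm_num) m]
        _ < ε := by linarith
    · -- B1 → K1
      rintro ⟨g, hg, hglim⟩ W hW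
      by_cases hWc : Wᶜ = ∅
      · have hWu : W = univ := by
          rw [← compl_compl W, hWc, compl_empty]
        rw [hWu]
        exact ⟨fun _ => univ, fun _ => isZeroSet_univ, (iUnion_const _).symm⟩
      · have hWcne : (Wᶜ : Set Y).Nonempty := nonempty_iff_ne_empty.2 hWc
        set B : ℕ → ℕ → Set X := fun k N =>
          ⋂ m, {x | 1/(k+1 : ℝ) ≤ Metric.infDist (g (m+N) x) Wᶜ} with hB
        have hBzero : ∀ k N, IsZeroSet (B k N) := by
          intro k N
          apply isZeroSet_iInter
          intro m
          exact isZeroSet_preimage (hg (m+N)) (isZeroSet_infDist_ge Wᶜ (1/(k+1:ℝ)))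
        have hBeq : f ⁻¹' W = ⋃ k, ⋃ N, B k N := by
          ext x
          simp only [hB, mem_preimage, mem_iUnion, mem_iInter, mem_setOf_eq]
          constructor
          · intro hx
            have hpos : 0 < Metric.infDist (f x) Wᶜ :=
              (hW.isClosed_compl.notMem_iff_infDist_pos hWcne).1 (by simpa using hx)
            obtain ⟨k, hk⟩ := exists_nat_one_div_lt hpos
            have : ∀ᶠ n in atTop, 1/(k+1:ℝ) < Metric.infDist (g n x) Wᶜ := by
              have hcont : Tendsto (fun n => Metric.infDist (g n x) Wᶜ) atTop
                  (𝓝 (Metric.infDist (f x) Wᶜ)) :=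
                ((Metric.continuous_infDist_pt (Wᶜ : Set Y)).tendsto _).comp (hglim x)
              exact hcont.eventually (eventually_gt_nhds (by exact_mod_cast hk))
            obtain ⟨N, hN⟩ := eventually_atTop.1 this
            exact ⟨k, N, fun m => le_of_lt (hN _ (Nat.le_add_left N m))⟩
          · rintro ⟨k, N, hkN⟩
            have hlim : Tendsto (fun m => Metric.infDist (g (m+N) x) Wᶜ) atTop
                (𝓝 (Metric.infDist (f x) Wᶜ)) :=
              ((Metric.continuous_infDist_pt (Wᶜ : Set Y)).tendsto _).comp
                ((hglim x).comp (tendsto_add_atTop_nat N))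
            have hge : 1/(k+1:ℝ) ≤ Metric.infDist (f x) Wᶜ :=
              ge_of_tendsto' hlim hkN
            have hpos : 0 < Metric.infDist (f x) Wᶜ := lt_of_lt_of_le (by positivity) hge
            by_contra hxW
            have : Metric.infDist (f x) Wᶜ = 0 :=
              Metric.infDist_zero_of_mem (by simpa using hxW)
            rw [this] at hpos; exact lt_irrefl _ hpos
        rw [hBeq, ← iUnion_pair_eq B]
        exact ⟨_, fun k => hBzero _ _, rfl⟩
  · -- backward direction
    intro hK1B1 A hA
    set F : X → Y := fun x => if x ∈ A then u else v with hF
    have hFK1 : MemK1 F := by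
      intro W hW
      have hpre : F ⁻¹' W = (if u ∈ W then A else ∅) ∪ (if v ∈ W then Aᶜ else ∅) := by
        ext x
        by_cases hxA : x ∈ A <;> by_cases huW : u ∈ W <;> by_cases hvW : v ∈ W <;>
          simp [hF, hxA, huW, hvW]
      rw [hpre]
      obtain ⟨Z1, hZ1, hZ1e⟩ : FunctionallyFSigma (if u ∈ W then A else ∅) := by
        split
        · exact functionallyFSigma_of_zeroSet hA
        · exact functionallyFSigma_of_zeroSet isZeroSet_empty
      obtain ⟨Z2, hZ2, hZ2e⟩ : FunctionallyFSigma (if v ∈ W then Aᶜ else ∅) := by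
        split
        · exact functionallyFSigma_compl_zeroSet hA
        · exact functionallyFSigma_of_zeroSet isZeroSet_empty
      refine ⟨fun n => if Even n then Z1 (n/2) else Z2 (n/2), ?_, ?_⟩
      · intro n
        by_cases he : Even n <;> simp only [he, if_true, if_false]
        · exact hZ1 _
        · exact hZ2 _
      · rw [hZ1e, hZ2e]
        ext x
        simp only [mem_union, mem_iUnion]
        constructor
        · rintro (⟨n, hn⟩ | ⟨n, hn⟩)
          · exact ⟨2*n, by simp [Nat.mul_div_cancel_left n (by norm_num : 0 < 2)]; simpa using hn⟩
          · refine ⟨2*n+1, ?_⟩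
            have : ¬ Even (2*n+1) := by simp [Nat.even_add_one, parity_simps]
            simp only [this, if_false]
            have : (2*n+1)/2 = n := by omega
            rw [this]; exact hn
        · rintro ⟨n, hn⟩
          by_cases he : Even n
          · left; exact ⟨n/2, by simpa [he] using hn⟩
          · right; exact ⟨n/2, by simpa [he] using hn⟩
    obtain ⟨g, hg, hglim⟩ := (hK1B1 F).1 hFK1
    refine ⟨fun N => ⋂ m, (g (N + m)) ⁻¹' U, ?_, ?_⟩
    · intro N
      exact ⟨fun m => (g (N + m)) ⁻¹' U, fun m => hU.preimage (hg _), rfl⟩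
    · ext x
      simp only [mem_iUnion, mem_iInter, mem_preimage]
      constructor
      · intro hxA
        have hFx : F x = u := by simp [hF, hxA]
        have : ∀ᶠ n in atTop, g n x ∈ U := by
          have := hglim x
          rw [hFx] at this
          exact this (hU.2.mem_nhds hu) 
        obtain ⟨N, hN⟩ := eventually_atTop.1 this
        exact ⟨N, fun m => hN _ (Nat.le_add_right N m)⟩
      · rintro ⟨N, hN⟩
        by_contra hxA
        have hFx : F x = v := by simp [hF, hxA]
        have : ∀ᶠ n in atTop, g n x ∈ V := by
          have := hglim x
          rw [hFx] at this
          exact this (hV.2.mem_nhds hv)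
        obtain ⟨M, hM⟩ := eventually_atTop.1 this
        have h1 : g (N + M) x ∈ U := hN M
        have h2 : g (N + M) x ∈ V := hM _ (Nat.le_add_left M N)
        exact absurd (hUV.ne_of_mem h1 h2) (by simp)
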